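/- Let (M, (W_j), (S_i^j)) be an exact-repair regenerating code with parameters (n,k,d) and secondary parameters (B,α,β), where n ≥ d+1. Let {1,…,d+1} = T ∪ L ∪ M' ∪ U be a partition into four (possibly empty) subsets and let i ∈ L. Then H(W_i | W_T, W_{L∖{i}}, S_{M'}^i) ≤ H(S_U^i) ≤ |U|·β, where S_{M'}^i = (S_m^i : m ∈ M') and S_U^i = (S_u^i : u ∈ U). -/

import Mathlib

open Finset

/-- Shannon entropy (base 2) of a finitely-valued random variable `X` on a finite
probability space with mass function `P`. -/
noncomputable def entH {Ω S : Type*} [Fintype Ω] (P : Ω → ℝ) (X : Ω → S) : ℝ :=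
  letI := Classical.decEq S
  ∑ s ∈ Finset.univ.image X,
    -((∑ ω ∈ Finset.univ.filter (fun ω => X ω = s), P ω) *
       Real.logb 2 (∑ ω ∈ Finset.univ.filter (fun ω => X ω = s), P ω))

/-- Conditional entropy `H(X | Y) = H(X, Y) - H(Y)`. -/
noncomputable def condH {Ω S T : Type*} [Fintype Ω] (P : Ω → ℝ) (X : Ω → S) (Y : Ω → T) : ℝ :=
  entH P (fun ω => (X ω, Y ω)) - entH P Y

/-- The joint random variable `W_J = (W_j : j ∈ J)`. -/
def jointW {Ω : Type*} {n : ℕ} {σW : Fin n → Type*} (W : ∀ j, Ω → σW j)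
    (J : Finset (Fin n)) : Ω → ∀ j : J, σW j.1 :=
  fun ω j => W j.1 ω

/-- The joint random variable `(S_i^j : (i,j) ∈ E)` for a set `E` of pairs. -/
def jointS {Ω : Type*} {n : ℕ} {σS : Fin n → Fin n → Type*} (S : ∀ i j, Ω → σS i j)
    (E : Finset (Fin n × Fin n)) : Ω → ∀ e : E, σS e.1.1 e.1.2 :=
  fun ω e => S e.1.1 e.1.2 ω

/-- The joint random variable `S_I^j = (S_i^j : i ∈ I)`. -/
def jointSto {Ω : Type*} {n : ℕ} {σS : Fin n → Fin n → Type*} (S : ∀ i j, Ω → σS i j)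
    (I : Finset (Fin n)) (j : Fin n) : Ω → ∀ i : I, σS i.1 j :=
  fun ω i => S i.1 j ω

noncomputable def fp {Ω S : Type*} [Fintype Ω] (P : Ω → ℝ) (X : Ω → S) (s : S) : ℝ :=
  letI := Classical.decEq S
  ∑ ω ∈ Finset.univ.filter (fun ω => X ω = s), P ω

section basic
variable {Ω S T : Type*} [Fintype Ω] {P : Ω → ℝ} {X : Ω → S} {Y : Ω → T}

lemma fp_nonneg (hP : ∀ ω, 0 ≤ P ω) (s : S) : 0 ≤ fp P X s := by
  classical
  exact Finset.sum_nonneg fun ω _ => hP ω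

lemma le_fp (hP : ∀ ω, 0 ≤ P ω) (ω : Ω) : P ω ≤ fp P X (X ω) := by
  classical
  refine Finset.single_le_sum (f := P) (fun ω _ => hP ω) ?_
  simp

lemma fp_comp_le {g : S → T} (hP : ∀ ω, 0 ≤ P ω) (h : ∀ ω, Y ω = g (X ω)) (s : S) :
    fp P X s ≤ fp P Y (g s) := by
  classical
  refine Finset.sum_le_sum_of_subset_of_nonneg ?_ (fun ω _ _ => hP ω)
  intro ω hω
  simp only [Finset.mem_filter, Finset.mem_univ, true_and] at *
  rw [h ω, hω]

lemma fp_sum : ∑ s ∈ (letI := Classical.decEq S; Finset.univ.image X), fp P X s = ∑ ω, P ω := by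
  classical
  simpa [fp] using Finset.sum_fiberwise_of_maps_to (g := X) (fun ω _ => Finset.mem_image_of_mem X (Finset.mem_univ ω)) P

lemma entH_omega : entH P X = ∑ ω, -(P ω * Real.logb 2 (fp P X (X ω))) := by
  classical
  rw [entH]
  rw [← Finset.sum_fiberwise_of_maps_to (g := X) (fun ω _ => Finset.mem_image_of_mem X (Finset.mem_univ ω)) (fun ω => -(P ω * Real.logb 2 (fp P X (X ω))))]
  refine Finset.sum_congr rfl fun s hs => ?_
  rw [show ∑ ω ∈ Finset.univ.filter (fun ω => X ω = s), -(P ω * Real.logb 2 (fp P X (X ω)))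
      = ∑ ω ∈ Finset.univ.filter (fun ω => X ω = s), -(P ω * Real.logb 2 (fp P X s)) from
    Finset.sum_congr rfl fun ω hω => by
      simp only [Finset.mem_filter] at hω
      rw [hω.2]]
  have hfp : fp P X s = ∑ ω ∈ Finset.univ.filter (fun ω => X ω = s), P ω := rfl
  rw [hfp, eq_comm]
  simp only [← mul_neg]
  rw [← Finset.sum_mul, mul_neg]

lemma fp_comp_eq {g : S → T} (hg : Set.InjOn g (Set.range X)) (ω : Ω) :
    fp P (fun ω' => g (X ω')) (g (X ω)) = fp P X (X ω) := by
  classical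
  refine Finset.sum_congr ?_ fun _ _ => rfl
  ext ω'
  simp only [Finset.mem_filter, Finset.mem_univ, true_and]
  constructor
  · intro h; exact hg (Set.mem_range_self ω') (Set.mem_range_self ω) h
  · intro h; rw [h]

/-- L1: relabeling by an injective-on-range map preserves entropy. -/
lemma entH_comp_eq {g : S → T} (hg : Set.InjOn g (Set.range X)) :
    entH P (fun ω => g (X ω)) = entH P X := by
  rw [entH_omega, entH_omega]
  exact Finset.sum_congr rfl fun ω _ => by rw [fp_comp_eq hg ω]

/-- L2: `H(Y) ≤ H(X,Y)`. -/
lemma entH_le_pair (hP : ∀ ω, 0 ≤ P ω) :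
    entH P Y ≤ entH P (fun ω => (X ω, Y ω)) := by
  rw [entH_omega, entH_omega]
  refine Finset.sum_le_sum fun ω _ => ?_
  rcases eq_or_lt_of_le (hP ω) with h0 | h0
  · rw [← h0]; simp
  · rw [neg_le_neg_iff]
    refine mul_le_mul_of_nonneg_left ?_ (hP ω)
    refine Real.logb_le_logb_of_le one_lt_two (lt_of_lt_of_le h0 (le_fp hP ω)) ?_
    exact fp_comp_le hP (g := Prod.snd) (fun _ => rfl) _

lemma entH_swap : entH P (fun ω => (X ω, Y ω)) = entH P (fun ω => (Y ω, X ω)) := by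
  have := entH_comp_eq (P := P) (X := fun ω => (X ω, Y ω)) (g := Prod.swap)
    (fun a _ b _ h => Prod.swap_injective h)
  have h2 : (entH P fun ω => (Y ω, X ω)) = entH P fun ω => (X ω, Y ω) := by simpa using this
  exact h2.symm

lemma entH_le_pair' (hP : ∀ ω, 0 ≤ P ω) :
    entH P X ≤ entH P (fun ω => (X ω, Y ω)) := by
  rw [entH_swap (X := X) (Y := Y)]
  exact entH_le_pair hP

/-- L3: a function of a random variable has no larger entropy. -/
lemma entH_comp_le {g : S → T} (hP : ∀ ω, 0 ≤ P ω) :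
    entH P (fun ω => g (X ω)) ≤ entH P X := by
  have h1 : entH P (fun ω => (g (X ω), X ω)) = entH P X :=
    entH_comp_eq (g := fun s => (g s, s)) (fun a _ b _ h => (Prod.ext_iff.1 h).2)
  rw [← h1]
  exact entH_le_pair' hP

lemma entH_const (hP1 : ∑ ω, P ω = 1) {c : S} : entH P (fun _ => c) = 0 := by
  classical
  rcases isEmpty_or_nonempty Ω with h | h
  · rw [entH]; simp
  · rw [entH]
    have : (Finset.univ.image (fun _ : Ω => c)) = {c} := by
      ext x; simp [eq_comm]
    simp only [this]
    rw [Finset.sum_singleton]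
    simp [hP1]

lemma fp_def [DecidableEq S] (s : S) :
    fp P X s = ∑ ω ∈ Finset.univ.filter (fun ω => X ω = s), P ω := by
  unfold fp
  congr 1
  exact Finset.filter_congr_decidable _ _ _

lemma fp_marginal {U' : Type*} [DecidableEq S] {A : Ω → S} {C : Ω → U'} (z : U') :
    ∑ x ∈ Finset.univ.image A, fp P (fun ω => (A ω, C ω)) (x, z) = fp P C z := by
  classical
  rw [fp_def]
  rw [← Finset.sum_fiberwise_of_maps_to (g := A) (t := Finset.univ.image A)
      (fun ω _ => Finset.mem_image_of_mem A (Finset.mem_univ _)) P]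
  refine Finset.sum_congr rfl fun x _ => ?_
  rw [fp_def]
  congr 1
  ext ω
  simp only [Finset.mem_filter, Finset.mem_univ, true_and, Prod.mk.injEq]
  tauto

/-- L5: submodularity `H(X,Y,Z) + H(Z) ≤ H(X,Z) + H(Y,Z)`. -/
lemma entH_submod {U' : Type*} {Z : Ω → U'} (hP : ∀ ω, 0 ≤ P ω) :
    entH P (fun ω => (X ω, (Y ω, Z ω))) + entH P Z
      ≤ entH P (fun ω => (X ω, Z ω)) + entH P (fun ω => (Y ω, Z ω)) := by
  classical
  set V : Ω → S × (T × U') := fun ω => (X ω, (Y ω, Z ω)) with hV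
  set XZ : Ω → S × U' := fun ω => (X ω, Z ω) with hXZ
  set YZ : Ω → T × U' := fun ω => (Y ω, Z ω) with hYZ
  have hl2 : (0:ℝ) < Real.log 2 := Real.log_pos one_lt_two
  set F : S × (T × U') → ℝ :=
    fun v => fp P XZ (v.1, v.2.2) * fp P YZ (v.2.1, v.2.2) / (fp P V v * fp P Z v.2.2) with hF
  set G : S × (T × U') → ℝ :=
    fun v => fp P XZ (v.1, v.2.2) * fp P YZ (v.2.1, v.2.2) / fp P Z v.2.2 with hG
  have hGnn : ∀ v, 0 ≤ G v := fun v =>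
    div_nonneg (mul_nonneg (fp_nonneg hP _) (fp_nonneg hP _)) (fp_nonneg hP _)
  -- the key mass bound
  have hQsum : ∑ ω, P ω * F (V ω) ≤ ∑ ω, P ω := by
    rw [← Finset.sum_fiberwise_of_maps_to (g := V) (t := Finset.univ.image V)
        (fun ω _ => Finset.mem_image_of_mem V (Finset.mem_univ _)) (fun ω => P ω * F (V ω))]
    have step1 : ∑ v ∈ Finset.univ.image V,
        (∑ ω ∈ Finset.univ.filter (fun ω => V ω = v), P ω * F (V ω))
        = ∑ v ∈ Finset.univ.image V, fp P V v * F v := by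
      refine Finset.sum_congr rfl fun v hv => ?_
      rw [fp_def, Finset.sum_mul]
      refine Finset.sum_congr rfl fun ω hω => ?_
      simp only [Finset.mem_filter] at hω
      rw [hω.2]
    rw [step1]
    have step2 : ∑ v ∈ Finset.univ.image V, fp P V v * F v
        ≤ ∑ v ∈ Finset.univ.image V, G v := by
      refine Finset.sum_le_sum fun v hv => ?_
      rcases eq_or_lt_of_le (fp_nonneg hP (X := V) v) with h0 | h0
      · rw [← h0, zero_mul]; exact hGnn v
      · have hb : 0 < fp P Z v.2.2 :=
          lt_of_lt_of_le h0 (fp_comp_le hP (g := fun v : S × (T × U') => v.2.2) (fun ω => rfl) v)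
        have heq : fp P V v * F v = G v := by
          rw [hF, hG]
          have ha' : fp P V v ≠ 0 := h0.ne'
          have hb' : fp P Z v.2.2 ≠ 0 := hb.ne'
          field_simp
        rw [heq]
    refine step2.trans ?_
    have step3 : ∑ v ∈ Finset.univ.image V, G v
        ≤ ∑ v ∈ (Finset.univ.image X) ×ˢ ((Finset.univ.image Y) ×ˢ (Finset.univ.image Z)), G v := by
      refine Finset.sum_le_sum_of_subset_of_nonneg ?_ (fun v _ _ => hGnn v)
      intro v hv
      rcases Finset.mem_image.1 hv with ⟨ω, _, rfl⟩
      simp [Finset.mem_product]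
      exact ⟨⟨ω, rfl⟩, ⟨ω, rfl⟩, ⟨ω, rfl⟩⟩
    refine step3.trans ?_
    rw [Finset.sum_product]
    have step4 : ∀ x ∈ Finset.univ.image X,
        (∑ p ∈ (Finset.univ.image Y) ×ˢ (Finset.univ.image Z), G (x, p))
        ≤ ∑ z ∈ Finset.univ.image Z, fp P XZ (x, z) := by
      intro x _
      rw [Finset.sum_product]
      rw [Finset.sum_comm]
      refine Finset.sum_le_sum fun z _ => ?_
      have hm : ∑ y ∈ Finset.univ.image Y, fp P YZ (y, z) = fp P Z z := fp_marginal z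
      have hsum : ∑ y ∈ Finset.univ.image Y, G (x, (y, z))
          = (fp P XZ (x, z) / fp P Z z) * ∑ y ∈ Finset.univ.image Y, fp P YZ (y, z) := by
        rw [Finset.mul_sum]
        refine Finset.sum_congr rfl fun y _ => ?_
        rw [hG]
        ring
      rw [hsum, hm]
      rcases eq_or_ne (fp P Z z) 0 with h0 | h0
      · rw [h0, mul_zero]; exact fp_nonneg hP _
      · rw [div_mul_cancel₀ _ h0]
    calc ∑ x ∈ Finset.univ.image X, ∑ p ∈ (Finset.univ.image Y) ×ˢ (Finset.univ.image Z), G (x, p)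
        ≤ ∑ x ∈ Finset.univ.image X, ∑ z ∈ Finset.univ.image Z, fp P XZ (x, z) :=
          Finset.sum_le_sum step4
      _ = ∑ z ∈ Finset.univ.image Z, ∑ x ∈ Finset.univ.image X, fp P XZ (x, z) := Finset.sum_comm
      _ = ∑ z ∈ Finset.univ.image Z, fp P Z z :=
          Finset.sum_congr rfl fun z _ => fp_marginal (A := X) (C := Z) z
      _ = ∑ ω, P ω := fp_sum
  -- termwise analytic inequality
  have main : ∀ ω, -(P ω * Real.logb 2 (fp P V (V ω))) + -(P ω * Real.logb 2 (fp P Z (Z ω)))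
      ≤ -(P ω * Real.logb 2 (fp P XZ (XZ ω))) + -(P ω * Real.logb 2 (fp P YZ (YZ ω)))
        + (P ω * F (V ω) - P ω) / Real.log 2 := by
    intro ω
    rcases eq_or_lt_of_le (hP ω) with h0 | h0
    · rw [← h0]; simp
    · have ha : 0 < fp P V (V ω) := lt_of_lt_of_le h0 (le_fp hP ω)
      have hb : 0 < fp P Z (Z ω) := lt_of_lt_of_le h0 (le_fp hP ω)
      have hc : 0 < fp P XZ (XZ ω) := lt_of_lt_of_le h0 (le_fp hP ω)
      have he : 0 < fp P YZ (YZ ω) := lt_of_lt_of_le h0 (le_fp hP ω)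
      set a := fp P V (V ω)
      set b := fp P Z (Z ω)
      set c := fp P XZ (XZ ω)
      set e := fp P YZ (YZ ω)
      have hFv : F (V ω) = c * e / (a * b) := rfl
      have hr : (0:ℝ) < c * e / (a * b) := div_pos (mul_pos hc he) (mul_pos ha hb)
      have hlog : Real.log (c * e / (a * b)) ≤ c * e / (a * b) - 1 :=
        Real.log_le_sub_one_of_pos hr
      have hexp : Real.log (c * e / (a * b))
          = Real.log c + Real.log e - (Real.log a + Real.log b) := by
        rw [Real.log_div (by positivity) (by positivity), Real.log_mul hc.ne' he.ne',
          Real.log_mul ha.ne' hb.ne']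
      have key : -(P ω * Real.log a) + -(P ω * Real.log b)
          ≤ -(P ω * Real.log c) + -(P ω * Real.log e) + (P ω * (c * e / (a * b)) - P ω) := by
        nlinarith [mul_le_mul_of_nonneg_left (hexp ▸ hlog) (hP ω)]
      rw [hFv]
      simp only [Real.logb]
      calc -(P ω * (Real.log a / Real.log 2)) + -(P ω * (Real.log b / Real.log 2))
          = (-(P ω * Real.log a) + -(P ω * Real.log b)) / Real.log 2 := by ring
        _ ≤ (-(P ω * Real.log c) + -(P ω * Real.log e)
              + (P ω * (c * e / (a * b)) - P ω)) / Real.log 2 := by gcongr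
        _ = -(P ω * (Real.log c / Real.log 2)) + -(P ω * (Real.log e / Real.log 2))
              + (P ω * (c * e / (a * b)) - P ω) / Real.log 2 := by ring
  -- assemble
  rw [entH_omega (X := V), entH_omega (X := Z), entH_omega (X := XZ), entH_omega (X := YZ)]
  rw [← Finset.sum_add_distrib]
  calc ∑ ω, (-(P ω * Real.logb 2 (fp P V (V ω))) + -(P ω * Real.logb 2 (fp P Z (Z ω))))
      ≤ ∑ ω, (-(P ω * Real.logb 2 (fp P XZ (XZ ω))) + -(P ω * Real.logb 2 (fp P YZ (YZ ω)))
          + (P ω * F (V ω) - P ω) / Real.log 2) := Finset.sum_le_sum fun ω _ => main ω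
    _ = (∑ ω, -(P ω * Real.logb 2 (fp P XZ (XZ ω)))) + (∑ ω, -(P ω * Real.logb 2 (fp P YZ (YZ ω))))
          + ((∑ ω, P ω * F (V ω)) - ∑ ω, P ω) / Real.log 2 := by
        rw [Finset.sum_add_distrib, Finset.sum_add_distrib, ← Finset.sum_div,
          Finset.sum_sub_distrib]
    _ ≤ (∑ ω, -(P ω * Real.logb 2 (fp P XZ (XZ ω)))) + (∑ ω, -(P ω * Real.logb 2 (fp P YZ (YZ ω)))) := by
        have : ((∑ ω, P ω * F (V ω)) - ∑ ω, P ω) / Real.log 2 ≤ 0 :=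
          div_nonpos_of_nonpos_of_nonneg (by linarith) hl2.le
        linarith

lemma entH_eq_of_inj {R : Type*} {A : Ω → S} {B : Ω → R} (g : S → R)
    (hg : Function.Injective g) (h : ∀ ω, B ω = g (A ω)) : entH P B = entH P A := by
  have hBA : B = fun ω => g (A ω) := funext h
  rw [hBA]
  exact entH_comp_eq (hg.injOn)

end basic

section cond
variable {Ω S T U' R : Type*} [Fintype Ω] {P : Ω → ℝ} {X : Ω → S} {Y : Ω → T} {Z : Ω → U'}

lemma condH_nonneg (hP : ∀ ω, 0 ≤ P ω) : 0 ≤ condH P X Y := by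
  rw [condH]
  linarith [entH_le_pair (P := P) (X := X) (Y := Y) hP]

lemma condH_comp_zero {f : T → S} (h : ∀ ω, X ω = f (Y ω)) : condH P X Y = 0 := by
  rw [condH]
  have h1 : entH P (fun ω => (X ω, Y ω)) = entH P Y :=
    entH_eq_of_inj (fun t => (f t, t)) (fun a b hab => (Prod.ext_iff.1 hab).2)
      (fun ω => by rw [h ω])
  linarith

lemma condH_chain : condH P (fun ω => (X ω, Z ω)) Y
    = condH P Z Y + condH P X (fun ω => (Z ω, Y ω)) := by
  rw [condH, condH, condH]
  have h1 : entH P (fun ω => ((X ω, Z ω), Y ω)) = entH P (fun ω => (X ω, (Z ω, Y ω))) :=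
    entH_eq_of_inj (A := fun ω => (X ω, (Z ω, Y ω))) (fun p => ((p.1, p.2.1), p.2.2))
      (fun a b hab => by
        obtain ⟨h1, h2⟩ := Prod.ext_iff.1 hab
        obtain ⟨h3, h4⟩ := Prod.ext_iff.1 h1
        exact Prod.ext h3 (Prod.ext h4 h2))
      (fun ω => rfl)
  linarith

lemma condH_congr_left {A : Ω → S} {B : Ω → R} {C : Ω → T} (g : S → R)
    (hg : Function.Injective g) (h : ∀ ω, B ω = g (A ω)) : condH P B C = condH P A C := by
  rw [condH, condH]
  have h1 : entH P (fun ω => (B ω, C ω)) = entH P (fun ω => (A ω, C ω)) :=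
    entH_eq_of_inj (fun p => (g p.1, p.2))
      (fun a b hab => by
        obtain ⟨h1, h2⟩ := Prod.ext_iff.1 hab
        exact Prod.ext (hg h1) h2)
      (fun ω => by rw [h ω])
  linarith

lemma condH_congr_right {A : Ω → S} {B : Ω → R} {C : Ω → T} (g : S → R)
    (hg : Function.Injective g) (h : ∀ ω, B ω = g (A ω)) : condH P C B = condH P C A := by
  rw [condH, condH]
  have h1 : entH P (fun ω => (C ω, B ω)) = entH P (fun ω => (C ω, A ω)) :=
    entH_eq_of_inj (fun p => (p.1, g p.2))
      (fun a b hab => by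
        obtain ⟨h1, h2⟩ := Prod.ext_iff.1 hab
        exact Prod.ext h1 (hg h2))
      (fun ω => by rw [h ω])
  have h2 : entH P B = entH P A := entH_eq_of_inj g hg h
  linarith

lemma condH_mono_left {A : Ω → S} {C : Ω → T} (f : S → R) (hP : ∀ ω, 0 ≤ P ω) :
    condH P (fun ω => f (A ω)) C ≤ condH P A C := by
  rw [condH, condH]
  have h1 : entH P (fun ω => (f (A ω), C ω)) ≤ entH P (fun ω => (A ω, C ω)) := by
    have := entH_comp_le (P := P) (X := fun ω => (A ω, C ω))
      (g := fun p => (f p.1, p.2)) hP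
    exact this
  linarith

/-- conditioning on more reduces entropy (drop the first component). -/
lemma condH_drop (hP : ∀ ω, 0 ≤ P ω) :
    condH P X (fun ω => (Y ω, Z ω)) ≤ condH P X Z := by
  rw [condH, condH]
  have := entH_submod (P := P) (X := X) (Y := Y) (Z := Z) hP
  linarith

lemma condH_swap_right : condH P X (fun ω => (Y ω, Z ω)) = condH P X (fun ω => (Z ω, Y ω)) := by
  exact condH_congr_right (fun p => (p.2, p.1))
    (fun a b hab => by
      obtain ⟨h1, h2⟩ := Prod.ext_iff.1 hab
      exact Prod.ext h2 h1)
    (fun ω => rfl)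

/-- conditioning on more reduces entropy (drop the second component). -/
lemma condH_drop' (hP : ∀ ω, 0 ≤ P ω) :
    condH P X (fun ω => (Y ω, Z ω)) ≤ condH P X Y := by
  rw [condH_swap_right]
  exact condH_drop hP

/-- conditioning on a function of the condition gives higher entropy. -/
lemma condH_le_comp_right {g : U' → R} (hP : ∀ ω, 0 ≤ P ω) :
    condH P X Z ≤ condH P X (fun ω => g (Z ω)) := by
  have h1 : condH P X Z = condH P X (fun ω => (g (Z ω), Z ω)) :=
    (condH_congr_right (fun z => (g z, z)) (fun a b hab => (Prod.ext_iff.1 hab).2)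
      (fun ω => rfl)).symm
  rw [h1]
  exact condH_drop' hP

/-- triangle inequality `H(X|Z) ≤ H(X|Y) + H(Y|Z)`. -/
lemma condH_triangle (hP : ∀ ω, 0 ≤ P ω) (Y : Ω → T) :
    condH P X Z ≤ condH P X Y + condH P Y Z := by
  have h1 : condH P X Z ≤ condH P (fun ω => (X ω, Y ω)) Z :=
    condH_mono_left (A := fun ω => (X ω, Y ω)) Prod.fst hP
  have h2 : condH P (fun ω => (X ω, Y ω)) Z
      = condH P Y Z + condH P X (fun ω => (Y ω, Z ω)) := condH_chain
  have h3 : condH P X (fun ω => (Y ω, Z ω)) ≤ condH P X Y := condH_drop' hP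
  linarith

lemma condH_zero_trans (hP : ∀ ω, 0 ≤ P ω) (Y : Ω → T)
    (h1 : condH P X Y = 0) (h2 : condH P Y Z = 0) : condH P X Z = 0 := by
  have := condH_triangle (P := P) (X := X) (Z := Z) hP Y
  have := condH_nonneg (P := P) (X := X) (Y := Z) hP
  linarith

lemma entH_eq_condH_const (hP1 : ∑ ω, P ω = 1) :
    entH P X = condH P X (fun _ => (() : Unit)) := by
  rw [condH]
  have h1 : entH P (fun ω => (X ω, ())) = entH P X :=
    entH_eq_of_inj (fun s => (s, ())) (fun a b hab => (Prod.ext_iff.1 hab).1) (fun ω => rfl)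
  rw [h1, entH_const hP1]
  ring

lemma condH_le_entH (hP : ∀ ω, 0 ≤ P ω) (hP1 : ∑ ω, P ω = 1) :
    condH P X Y ≤ entH P X := by
  rw [entH_eq_condH_const (X := X) hP1]
  have h1 : condH P X Y = condH P X (fun ω => ((() : Unit), Y ω)) :=
    (condH_congr_right (fun y => ((), y)) (fun a b hab => (Prod.ext_iff.1 hab).2)
      (fun ω => rfl)).symm
  rw [h1]
  exact condH_drop' hP

end cond

section joint
variable {Ω R : Type*} [Fintype Ω] {P : Ω → ℝ} {n : ℕ} {σ : Fin n → Type*}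

/-- subadditivity of conditional entropy for a joint family. -/
lemma condH_joint_le (X : ∀ j, Ω → σ j) (C : Ω → R) (hP : ∀ ω, 0 ≤ P ω)
    (J : Finset (Fin n)) :
    condH P (fun ω (j : {x // x ∈ J}) => X j.1 ω) C ≤ ∑ j ∈ J, condH P (X j) C := by
  classical
  induction J using Finset.induction_on with
  | empty =>
      rw [Finset.sum_empty]
      have : condH P (fun ω (j : {x // x ∈ (∅ : Finset (Fin n))}) => X j.1 ω) C = 0 :=
        condH_comp_zero (f := fun _ (j : {x // x ∈ (∅ : Finset (Fin n))}) =>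
          absurd j.2 (Finset.notMem_empty j.1)) (fun ω => funext fun j =>
            absurd j.2 (Finset.notMem_empty j.1))
      rw [this]
  | @insert a J' ha ih =>
      set g : σ a × (∀ j : {x // x ∈ J'}, σ j.1) → (∀ j : {x // x ∈ insert a J'}, σ j.1) :=
        fun p j => if h : (j : Fin n) = a then cast (congrArg σ h.symm) p.1
          else p.2 ⟨j.1, (Finset.mem_insert.1 j.2).resolve_left h⟩ with hg
      have hginj : Function.Injective g := by
        intro p q hpq
        have h1 : p.1 = q.1 := by
          have := congrFun hpq ⟨a, Finset.mem_insert_self a J'⟩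
          simpa [hg] using this
        have h2 : p.2 = q.2 := by
          funext j
          have := congrFun hpq ⟨j.1, Finset.mem_insert_of_mem j.2⟩
          have hne : (j : Fin n) ≠ a := fun h => ha (h ▸ j.2)
          simpa [hg, hne] using this
        exact Prod.ext h1 h2
      have hpt : ∀ ω, (fun (j : {x // x ∈ insert a J'}) => X j.1 ω)
          = g (X a ω, fun (j : {x // x ∈ J'}) => X j.1 ω) := by
        intro ω
        funext j
        obtain ⟨jv, hj⟩ := j
        simp only [hg]
        by_cases h : jv = a
        · rw [dif_pos h]
          subst h
          rfl
        · rw [dif_neg h]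
      have e1 : condH P (fun ω (j : {x // x ∈ insert a J'}) => X j.1 ω) C
          = condH P (fun ω => (X a ω, fun (j : {x // x ∈ J'}) => X j.1 ω)) C :=
        condH_congr_left g hginj hpt
      have e2 : condH P (fun ω => (X a ω, fun (j : {x // x ∈ J'}) => X j.1 ω)) C
          = condH P (fun ω (j : {x // x ∈ J'}) => X j.1 ω) C
            + condH P (X a) (fun ω => ((fun (j : {x // x ∈ J'}) => X j.1 ω), C ω)) :=
        condH_chain
      have e3 : condH P (X a) (fun ω => ((fun (j : {x // x ∈ J'}) => X j.1 ω), C ω))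
          ≤ condH P (X a) C := condH_drop hP
      rw [Finset.sum_insert ha, e1, e2]
      linarith

end joint


/-- An exact-repair regenerating code with parameters `(n,k,d)` (with `1 ≤ k ≤ d ≤ n-1`)
and secondary parameters `(B,α,β)`: the file `M`, the stored data `W j` on server `j`
(servers indexed by `Fin n`, server `j` of the paper being index `j-1`), and the helper
information `S i j` sent from server `i` to repair server `j`. -/
structure IsRegenCode {Ω : Type*} [Fintype Ω] (n k d : ℕ) (B α β : ℝ) (P : Ω → ℝ)
    {σM : Type*} {σW : Fin n → Type*} {σS : Fin n → Fin n → Type*}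
    (M : Ω → σM) (W : ∀ j, Ω → σW j) (S : ∀ i j, Ω → σS i j) : Prop where
  prob_nonneg : ∀ ω, 0 ≤ P ω
  prob_sum : ∑ ω, P ω = 1
  hk : 1 ≤ k
  hkd : k ≤ d
  hdn : d + 1 ≤ n
  hB : 0 ≤ B
  hα : 0 ≤ α
  hβ : 0 ≤ β
  hMB : entH P M = B
  hWα : ∀ j, entH P (W j) = α
  hWM : ∀ j, condH P (W j) M = 0
  hMW : ∀ J : Finset (Fin n), k ≤ J.card → condH P M (jointW W J) = 0
  hSβ : ∀ i j, i ≠ j → entH P (S i j) = β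
  hSW : ∀ i j, i ≠ j → condH P (S i j) (W i) = 0
  hWS : ∀ (j : Fin n) (I : Finset (Fin n)), d ≤ I.card → j ∉ I →
    condH P (W j) (jointSto S I j) = 0

/-- `B_q = qα + ((k-q)(k-q-1)/2)β + (d+1-k)(k-q)β`. -/
noncomputable def Bfun (k d q : ℕ) (α β : ℝ) : ℝ :=
  (q : ℝ) * α + (((k - q) * (k - q - 1) : ℕ) : ℝ) / 2 * β
    + (((d + 1 - k) * (k - q) : ℕ) : ℝ) * β

/-- for a partition `{1,…,d+1} = T ∪ L ∪ M' ∪ U` and `i ∈ L`,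
`H(W_i | W_T, W_{L∖{i}}, S_{M'}^i) ≤ H(S_U^i) ≤ |U|·β`. -/
theorem stmt_18 {Ω : Type*} [Fintype Ω] {n k d : ℕ} {B α β : ℝ} {P : Ω → ℝ}
    {σM : Type*} {σW : Fin n → Type*} {σS : Fin n → Fin n → Type*}
    {M : Ω → σM} {W : ∀ j, Ω → σW j} {S : ∀ i j, Ω → σS i j}
    (hcode : IsRegenCode n k d B α β P M W S)
    (T L M' U : Finset (Fin n))
    (hd1 : Disjoint T L) (hd2 : Disjoint T M') (hd3 : Disjoint T U)
    (hd4 : Disjoint L M') (hd5 : Disjoint L U) (hd6 : Disjoint M' U)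
    (hunion : T ∪ L ∪ M' ∪ U = Finset.univ.filter (fun x : Fin n => (x : ℕ) < d + 1))
    (i : Fin n) (hi : i ∈ L) :
    condH P (W i) (fun ω =>
        (jointW W T ω, jointW W (L.erase i) ω, jointSto S M' i ω))
      ≤ entH P (jointSto S U i)
    ∧ entH P (jointSto S U i) ≤ (U.card : ℝ) * β := by
  classical
  obtain ⟨hPnn, hP1, hk, hkd, hdn, hB, hα, hβ, hMB, hWα, hWM, hMW, hSβ, hSW, hWS⟩ := hcode
  have hiT : i ∉ T := Finset.disjoint_right.1 hd1 hi
  have hiM : i ∉ M' := Finset.disjoint_left.1 hd4 hi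
  have hiU : i ∉ U := Finset.disjoint_left.1 hd5 hi
  set L' := L.erase i with hL'
  set I : Finset (Fin n) := ((T ∪ L') ∪ M') ∪ U with hI
  have hiI : i ∉ I := by
    simp only [hI, Finset.mem_union, not_or]
    exact ⟨⟨⟨hiT, Finset.notMem_erase i L⟩, hiM⟩, hiU⟩
  have hDcard : (Finset.univ.filter (fun x : Fin n => (x : ℕ) < d + 1)).card = d + 1 := by
    have himg : Finset.univ.filter (fun x : Fin n => (x : ℕ) < d + 1)
        = Finset.univ.image (Fin.castLE hdn) := by
      ext x
      simp only [Finset.mem_filter, Finset.mem_univ, true_and, Finset.mem_image]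
      constructor
      · intro hx
        exact ⟨⟨(x : ℕ), hx⟩, rfl⟩
      · rintro ⟨m, rfl⟩
        exact m.isLt
    rw [himg, Finset.card_image_of_injective _ (Fin.castLE_injective _), Finset.card_univ,
      Fintype.card_fin]
  have hd12 : Disjoint (T ∪ L) M' := Finset.disjoint_union_left.2 ⟨hd2, hd4⟩
  have hd123 : Disjoint ((T ∪ L) ∪ M') U :=
    Finset.disjoint_union_left.2 ⟨Finset.disjoint_union_left.2 ⟨hd3, hd5⟩, hd6⟩
  have hcards : T.card + L.card + M'.card + U.card = d + 1 := by
    have h0 := congrArg Finset.card hunion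
    rw [hDcard, Finset.card_union_of_disjoint hd123, Finset.card_union_of_disjoint hd12,
      Finset.card_union_of_disjoint hd1] at h0
    omega
  have hL1 : 1 ≤ L.card := Finset.card_pos.2 ⟨i, hi⟩
  have hL'card : L'.card = L.card - 1 := Finset.card_erase_of_mem hi
  have hd1' : Disjoint T L' := hd1.mono_right (Finset.erase_subset _ _)
  have hd12' : Disjoint (T ∪ L') M' :=
    Finset.disjoint_union_left.2 ⟨hd2, hd4.mono_left (Finset.erase_subset _ _)⟩
  have hd123' : Disjoint ((T ∪ L') ∪ M') U :=
    Finset.disjoint_union_left.2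
      ⟨Finset.disjoint_union_left.2 ⟨hd3, hd5.mono_left (Finset.erase_subset _ _)⟩, hd6⟩
  have hIcard : I.card = d := by
    rw [hI, Finset.card_union_of_disjoint hd123', Finset.card_union_of_disjoint hd12',
      Finset.card_union_of_disjoint hd1', hL'card]
    omega
  set C0 := fun ω => (jointW W T ω, jointW W L' ω, jointSto S M' i ω) with hC0
  set SU := jointSto S U i with hSUdef
  set Z0 := fun ω => (SU ω, C0 ω) with hZ0
  have hne : ∀ j ∈ I, j ≠ i := fun j hj h => hiI (h ▸ hj)
  have hcoord : ∀ j ∈ I, condH P (S j i) Z0 = 0 := by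
    intro j hj
    rcases Finset.mem_union.1 hj with hj' | hjU
    · rcases Finset.mem_union.1 hj' with hj'' | hjM
      · have hWjZ : condH P (W j) Z0 = 0 := by
          rcases Finset.mem_union.1 hj'' with hjT | hjL
          · exact condH_comp_zero (f := fun p => p.2.1 ⟨j, hjT⟩) (fun ω => rfl)
          · exact condH_comp_zero (f := fun p => p.2.2.1 ⟨j, hjL⟩) (fun ω => rfl)
        exact condH_zero_trans hPnn (W j) (hSW j i (hne j hj)) hWjZ
      · exact condH_comp_zero (f := fun p => p.2.2.2 ⟨j, hjM⟩) (fun ω => rfl)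
    · exact condH_comp_zero (f := fun p => p.1 ⟨j, hjU⟩) (fun ω => rfl)
  have hYZ : condH P (jointSto S I i) Z0 = 0 := by
    have hle : condH P (jointSto S I i) Z0 ≤ ∑ j ∈ I, condH P (S j i) Z0 :=
      condH_joint_le (σ := fun j => σS j i) (fun j => S j i) Z0 hPnn I
    have hsum0 : ∑ j ∈ I, condH P (S j i) Z0 = 0 := Finset.sum_eq_zero hcoord
    have hge : 0 ≤ condH P (jointSto S I i) Z0 := condH_nonneg hPnn
    linarith
  have hWY : condH P (W i) (jointSto S I i) = 0 := hWS i I (le_of_eq hIcard.symm) hiI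
  have h4 : condH P (W i) Z0 = 0 := condH_zero_trans hPnn (jointSto S I i) hWY hYZ
  have h1 : condH P (W i) C0 ≤ condH P (fun ω => (W i ω, SU ω)) C0 :=
    condH_mono_left (A := fun ω => (W i ω, SU ω)) Prod.fst hPnn
  have h2 : condH P (fun ω => (W i ω, SU ω)) C0 = condH P SU C0 + condH P (W i) Z0 :=
    condH_chain
  have h3 : condH P SU C0 ≤ entH P SU := condH_le_entH hPnn hP1
  constructor
  · calc condH P (W i) C0 ≤ condH P SU C0 + condH P (W i) Z0 := h1.trans (le_of_eq h2)
      _ ≤ entH P SU := by rw [h4]; linarith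
  · have hUβ : ∀ u ∈ U, condH P (S u i) (fun _ => (() : Unit)) = β := by
      intro u hu
      have hui : u ≠ i := fun h => hiU (h ▸ hu)
      rw [← entH_eq_condH_const hP1]
      exact hSβ u i hui
    calc entH P SU = condH P SU (fun _ => (() : Unit)) := entH_eq_condH_const hP1
      _ ≤ ∑ u ∈ U, condH P (S u i) (fun _ => (() : Unit)) :=
          condH_joint_le (σ := fun j => σS j i) (fun j => S j i) _ hPnn U
      _ = ∑ u ∈ U, β := Finset.sum_congr rfl hUβ
      _ = (U.card : ℝ) * β := by rw [Finset.sum_const, nsmul_eq_mul]
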